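/- Let G be a graph on N vertices with edge density satisfying t_{K₂}(G) ≥ (1−δ)p, and suppose at least εN vertices of G have degree less than (1−ε)pN, where 0 < ε, p < 1. Then hom(K_{1,2}, G) ≥ (1 + ε³ − g(δ)) p² N³ for an explicit function g with g(δ) → 0 as δ → 0; more precisely, writing δ(v) = |N(v)| − pN, one has Σ_v |N(v)|² = p²N³ + 2pN Σ_v δ(v) + Σ_v δ(v)², and Σ_v δ(v)² ≥ ε³ p² N³. -/

import Mathlib

open Finset

noncomputable def homCount {α β : Type*} (H : SimpleGraph α) (G : SimpleGraph β) : ℕ :=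
  Nat.card {f : α → β // ∀ ⦃a b⦄, H.Adj a b → G.Adj (f a) (f b)}

noncomputable def homDensity {α β : Type*} (H : SimpleGraph α) (G : SimpleGraph β) : ℝ :=
  (homCount H G : ℝ) / (Nat.card β : ℝ) ^ (Nat.card α)

lemma homCount_K2 {β : Type*} [Fintype β] (G : SimpleGraph β) [DecidableRel G.Adj] :
    homCount (SimpleGraph.completeGraph (Fin 2)) G = ∑ v, G.degree v := by
  have e : {f : Fin 2 → β // ∀ ⦃a b⦄, (SimpleGraph.completeGraph (Fin 2)).Adj a b → G.Adj (f a) (f b)}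
      ≃ G.Dart :=
    { toFun := fun f => ⟨(f.1 0, f.1 1), f.2 (by decide : (0 : Fin 2) ≠ 1)⟩
      invFun := fun d => ⟨![d.toProd.1, d.toProd.2], by
        intro a b hab
        fin_cases a <;> fin_cases b <;> simp_all [SimpleGraph.completeGraph] <;>
          first | exact d.adj | exact d.adj.symm⟩
      left_inv := fun f => by
        ext i; fin_cases i <;> simp
      right_inv := fun d => by
        apply SimpleGraph.Dart.ext
        simp }
  rw [homCount, Nat.card_congr e, Nat.card_eq_fintype_card,
    SimpleGraph.dart_card_eq_sum_degrees]

theorem many_low_degree_vertices {β : Type*} [Fintype β] (G : SimpleGraph β)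
    [DecidableRel G.Adj] (N : ℕ) (hN : N = Fintype.card β)
    (p ε δ : ℝ) (hp : 0 < p) (hp1 : p < 1) (hε : 0 < ε) (hε1 : ε < 1) (hδ : 0 ≤ δ)
    (hedge : homDensity (SimpleGraph.completeGraph (Fin 2)) G ≥ (1 - δ) * p)
    (hlow : ε * N ≤ Nat.card {v : β | (G.degree v : ℝ) < (1 - ε) * p * N}) :
    (∑ v : β, (G.degree v : ℝ) ^ 2 =
        p ^ 2 * N ^ 3 + 2 * p * N * (∑ v : β, ((G.degree v : ℝ) - p * N)) +
          ∑ v : β, ((G.degree v : ℝ) - p * N) ^ 2) ∧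
    (∑ v : β, ((G.degree v : ℝ) - p * N) ^ 2 ≥ ε ^ 3 * p ^ 2 * N ^ 3) ∧
    (∑ v : β, (G.degree v : ℝ) ^ 2 ≥ (1 + ε ^ 3 - 2 * δ) * p ^ 2 * N ^ 3) := by
  classical
  have hNcard : (Fintype.card β : ℝ) = (N : ℝ) := by exact_mod_cast hN.symm
  -- Part 1: the algebraic identity
  have h1 : ∑ v : β, (G.degree v : ℝ) ^ 2 =
      p ^ 2 * N ^ 3 + 2 * p * N * (∑ v : β, ((G.degree v : ℝ) - p * N)) +
        ∑ v : β, ((G.degree v : ℝ) - p * N) ^ 2 := by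
    have expand : ∀ v : β, ((G.degree v : ℝ) - p * N) ^ 2 =
        (G.degree v : ℝ) ^ 2 - 2 * p * N * (G.degree v : ℝ) + (p * N) ^ 2 := fun v => by ring
    simp only [expand, Finset.sum_add_distrib, Finset.sum_sub_distrib, ← Finset.mul_sum,
      Finset.sum_const, Finset.card_univ, nsmul_eq_mul, hNcard]
    ring
  have hNnn : (0 : ℝ) ≤ N := Nat.cast_nonneg N
  have h2 : ∑ v : β, ((G.degree v : ℝ) - p * N) ^ 2 ≥ ε ^ 3 * p ^ 2 * N ^ 3 := by
    set P : β → Prop := fun v => (G.degree v : ℝ) < (1 - ε) * p * N with hP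
    have hcard : (Nat.card {v : β | P v} : ℝ) = ((univ.filter P).card : ℝ) := by
      rw [Nat.card_coe_set_eq, Set.ncard_eq_toFinset_card', Set.toFinset_setOf]
    have hsub : ∑ v ∈ univ.filter P, ((G.degree v : ℝ) - p * N) ^ 2 ≤
        ∑ v : β, ((G.degree v : ℝ) - p * N) ^ 2 :=
      Finset.sum_le_sum_of_subset_of_nonneg (Finset.filter_subset _ _)
        (fun v _ _ => sq_nonneg _)
    have hterm : ∀ v ∈ univ.filter P, (ε * p * N) ^ 2 ≤ ((G.degree v : ℝ) - p * N) ^ 2 := by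
      intro v hv
      have hv' : (G.degree v : ℝ) < (1 - ε) * p * N := (Finset.mem_filter.mp hv).2
      have hdnn : (0 : ℝ) ≤ (G.degree v : ℝ) := Nat.cast_nonneg _
      nlinarith [mul_nonneg (mul_nonneg hε.le hp.le) hNnn]
    have := Finset.sum_le_sum hterm
    rw [Finset.sum_const, nsmul_eq_mul] at this
    have hcardge : ε * N ≤ ((univ.filter P).card : ℝ) := by rw [← hcard]; exact hlow
    have hεpN : (0 : ℝ) ≤ (ε * p * N) ^ 2 := sq_nonneg _
    calc ε ^ 3 * p ^ 2 * N ^ 3 = (ε * N) * (ε * p * N) ^ 2 := by ring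
      _ ≤ ((univ.filter P).card : ℝ) * (ε * p * N) ^ 2 := by
          exact mul_le_mul_of_nonneg_right hcardge hεpN
      _ ≤ ∑ v ∈ univ.filter P, ((G.degree v : ℝ) - p * N) ^ 2 := this
      _ ≤ _ := hsub
  refine ⟨h1, h2, ?_⟩
  -- Part 3
  rcases Nat.eq_zero_or_pos N with hN0 | hNpos
  · have : IsEmpty β := by
      rw [← Fintype.card_eq_zero_iff, ← hN, hN0]
    simp [Finset.univ_eq_empty, hN0]
  · have hNr : (0 : ℝ) < N := by exact_mod_cast hNpos
    have hdeg : (1 - δ) * p * N ^ 2 ≤ ∑ v : β, (G.degree v : ℝ) := by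
      have hh : homDensity (SimpleGraph.completeGraph (Fin 2)) G =
          (∑ v : β, (G.degree v : ℝ)) / (N : ℝ) ^ 2 := by
        rw [homDensity, homCount_K2, Nat.card_eq_fintype_card, Nat.card_eq_fintype_card,
          hNcard]
        push_cast
        norm_num
      rw [hh, ge_iff_le, le_div_iff₀ (by positivity)] at hedge
      linarith
    have hsumδ : -(δ * p * N ^ 2) ≤ ∑ v : β, ((G.degree v : ℝ) - p * N) := by
      rw [Finset.sum_sub_distrib, Finset.sum_const, Finset.card_univ, nsmul_eq_mul, hNcard]
      nlinarith
    have h2pN : (0 : ℝ) ≤ 2 * p * N := by positivity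
    nlinarith [mul_le_mul_of_nonneg_left hsumδ h2pN, h2]
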